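/- Let n ≥ 1 be an integer, let 0 < a' < a, and let r' > 0. Then (∫₀^{r'} r^{n−1} e^{−a' r²} dr) · (∫₀^{∞} r^{n−1} e^{−a r²} dr) ≤ (∫₀^{r'} r^{n−1} e^{−a r²} dr) · (∫₀^{∞} r^{n−1} e^{−a' r²} dr); equivalently, the ratio of the truncated integrals ∫₀^{r'} r^{n−1} e^{−a' r²} dr / ∫₀^{r'} r^{n−1} e^{−a r²} dr is at most the ratio of the full integrals ∫₀^{∞} r^{n−1} e^{−a' r²} dr / ∫₀^{∞} r^{n−1} e^{−a r²} dr. -/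

import Mathlib

open MeasureTheory Real Set

lemma intOn_pow_gauss {b : ℝ} (hb : 0 < b) (m : ℕ) :
    IntegrableOn (fun x : ℝ => x ^ m * Real.exp (-b * x ^ 2)) (Ioi 0) := by
  have h := integrableOn_rpow_mul_exp_neg_mul_sq hb
    (s := (m : ℝ)) (lt_of_lt_of_le neg_one_lt_zero (Nat.cast_nonneg m))
  refine h.congr_fun (fun x hx => ?_) measurableSet_Ioi
  simp only [Real.rpow_natCast]

/-- Monotonicity of truncated radial Gaussian integrals: for `n ≥ 1`, `0 < a' < a` and
`r' > 0`, the ratio of the truncated integrals `∫₀^{r'} r^{n-1} e^{-a'r²} dr /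
∫₀^{r'} r^{n-1} e^{-ar²} dr` is at most the ratio of the full integrals, stated in
product form. -/
theorem truncated_radial_gaussian_ratio
    (n : ℕ) (hn : 1 ≤ n) (a a' r' : ℝ)
    (ha' : 0 < a') (haa : a' < a) (hr : 0 < r') :
    (∫ r in Ioc (0:ℝ) r', r ^ (n - 1) * Real.exp (-a' * r ^ 2)) *
        (∫ r in Ioi (0:ℝ), r ^ (n - 1) * Real.exp (-a * r ^ 2)) ≤
      (∫ r in Ioc (0:ℝ) r', r ^ (n - 1) * Real.exp (-a * r ^ 2)) *
        (∫ r in Ioi (0:ℝ), r ^ (n - 1) * Real.exp (-a' * r ^ 2)) := by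
  have ha : 0 < a := ha'.trans haa
  set m := n - 1 with hm
  have hIf : IntegrableOn (fun x : ℝ => x ^ m * Real.exp (-a * x ^ 2)) (Ioi 0) :=
    intOn_pow_gauss ha m
  have hIf' : IntegrableOn (fun x : ℝ => x ^ m * Real.exp (-a' * x ^ 2)) (Ioi 0) :=
    intOn_pow_gauss ha' m
  have hsub : Ioc (0:ℝ) r' ⊆ Ioi 0 := Ioc_subset_Ioi_self
  have hsub2 : Ioi r' ⊆ Ioi (0:ℝ) := Ioi_subset_Ioi hr.le
  have hIfc := hIf.mono_set hsub
  have hIf'c := hIf'.mono_set hsub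
  have hIft := hIf.mono_set hsub2
  have hIf't := hIf'.mono_set hsub2
  have hunion : Ioc (0:ℝ) r' ∪ Ioi r' = Ioi 0 := Ioc_union_Ioi_eq_Ioi hr.le
  have hdisj : Disjoint (Ioc (0:ℝ) r') (Ioi r') := Ioc_disjoint_Ioi le_rfl
  have hsplitA : (∫ r in Ioi (0:ℝ), r ^ m * Real.exp (-a * r ^ 2)) =
      (∫ r in Ioc (0:ℝ) r', r ^ m * Real.exp (-a * r ^ 2)) +
        ∫ r in Ioi r', r ^ m * Real.exp (-a * r ^ 2) := by
    rw [← hunion, setIntegral_union hdisj measurableSet_Ioi hIfc hIft]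
  have hsplitA' : (∫ r in Ioi (0:ℝ), r ^ m * Real.exp (-a' * r ^ 2)) =
      (∫ r in Ioc (0:ℝ) r', r ^ m * Real.exp (-a' * r ^ 2)) +
        ∫ r in Ioi r', r ^ m * Real.exp (-a' * r ^ 2) := by
    rw [← hunion, setIntegral_union hdisj measurableSet_Ioi hIf'c hIf't]
  set C : ℝ := Real.exp ((a - a') * r' ^ 2) with hC
  -- nonnegativity
  have hA : 0 ≤ ∫ r in Ioc (0:ℝ) r', r ^ m * Real.exp (-a * r ^ 2) :=
    setIntegral_nonneg measurableSet_Ioc fun x hx => by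
      have h0 : 0 < x := hx.1
      positivity
  have hA' : 0 ≤ ∫ r in Ioc (0:ℝ) r', r ^ m * Real.exp (-a' * r ^ 2) :=
    setIntegral_nonneg measurableSet_Ioc fun x hx => by
      have h0 : 0 < x := hx.1
      positivity
  have hT : 0 ≤ ∫ r in Ioi r', r ^ m * Real.exp (-a * r ^ 2) :=
    setIntegral_nonneg measurableSet_Ioi fun x hx => by
      have : (0:ℝ) < x := hr.trans hx
      positivity
  -- key pointwise identity
  have hexp : ∀ b x : ℝ, Real.exp (-b * x ^ 2) =
      Real.exp ((a - b) * x ^ 2) * Real.exp (-a * x ^ 2) := by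
    intro b x
    rw [← Real.exp_add]
    ring_nf
  have key1 : (∫ r in Ioc (0:ℝ) r', r ^ m * Real.exp (-a' * r ^ 2)) ≤
      C * ∫ r in Ioc (0:ℝ) r', r ^ m * Real.exp (-a * r ^ 2) := by
    rw [← MeasureTheory.integral_const_mul]
    refine setIntegral_mono_on hIf'c (hIfc.const_mul C) measurableSet_Ioc fun x hx => ?_
    have hx0 : 0 < x := hx.1
    have hx2 : x ^ 2 ≤ r' ^ 2 := by nlinarith [hx.2]
    have hle : Real.exp ((a - a') * x ^ 2) ≤ C := by
      rw [hC]
      exact Real.exp_le_exp.mpr (by nlinarith)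
    calc x ^ m * Real.exp (-a' * x ^ 2)
        = Real.exp ((a - a') * x ^ 2) * (x ^ m * Real.exp (-a * x ^ 2)) := by
          rw [hexp a' x]; ring
      _ ≤ C * (x ^ m * Real.exp (-a * x ^ 2)) := by
          have : (0:ℝ) ≤ x ^ m * Real.exp (-a * x ^ 2) := by positivity
          exact mul_le_mul_of_nonneg_right hle this
  have key2 : C * (∫ r in Ioi r', r ^ m * Real.exp (-a * r ^ 2)) ≤
      ∫ r in Ioi r', r ^ m * Real.exp (-a' * r ^ 2) := by
    rw [← MeasureTheory.integral_const_mul]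
    refine setIntegral_mono_on (hIft.const_mul C) hIf't measurableSet_Ioi fun x hx => ?_
    have hx0 : 0 < x := hr.trans hx
    have hx2 : r' ^ 2 ≤ x ^ 2 := by nlinarith [le_of_lt (Set.mem_Ioi.mp hx)]
    have hle : C ≤ Real.exp ((a - a') * x ^ 2) := by
      rw [hC]
      exact Real.exp_le_exp.mpr (by nlinarith)
    calc C * (x ^ m * Real.exp (-a * x ^ 2))
        ≤ Real.exp ((a - a') * x ^ 2) * (x ^ m * Real.exp (-a * x ^ 2)) := by
          have : (0:ℝ) ≤ x ^ m * Real.exp (-a * x ^ 2) := by positivity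
          exact mul_le_mul_of_nonneg_right hle this
      _ = x ^ m * Real.exp (-a' * x ^ 2) := by rw [hexp a' x]; ring
  rw [hsplitA, hsplitA']
  nlinarith [mul_le_mul_of_nonneg_right key1 hT,
    mul_le_mul_of_nonneg_left key2 hA]
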